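/- For every nonnegative integer k, every nonnegative integer j, and every real number t ≥ 0, the k-th derivative of the polynomial κ_j(t) = ∑_{l=0}^{j} t^l satisfies κ_j^{(k)}(t) ≤ k! · (κ_j(t))^{k+1}. -/

import Mathlib

open Finset

/-- Closed form for the iterated derivative of `s ↦ ∑_{l<j+1} s^l`. -/
lemma kappa_iteratedDeriv (j k : ℕ) :
    iteratedDeriv k (fun s : ℝ => ∑ l ∈ Finset.range (j + 1), s ^ l) =
      fun s : ℝ => ∑ l ∈ Finset.range (j + 1), (l.descFactorial k : ℝ) * s ^ (l - k) := by
  induction k with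
  | zero => funext s; simp
  | succ k ih =>
    rw [iteratedDeriv_succ, ih]
    funext s
    have hd : HasDerivAt
        (fun s : ℝ => ∑ l ∈ Finset.range (j + 1), (l.descFactorial k : ℝ) * s ^ (l - k))
        (∑ l ∈ Finset.range (j + 1),
          (l.descFactorial k : ℝ) * ((l - k : ℕ) * s ^ (l - k - 1))) s :=
      HasDerivAt.fun_sum fun l _ => (hasDerivAt_pow (l - k) s).const_mul _
    rw [hd.deriv]
    refine Finset.sum_congr rfl fun l _ => ?_
    rw [Nat.descFactorial_succ, Nat.sub_sub]
    push_cast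
    ring

/-- Key combinatorial inequality. -/
lemma kappa_key (k : ℕ) : ∀ (N : ℕ) (t : ℝ), 0 ≤ t →
    ∑ m ∈ Finset.range N, ((m + k).choose k : ℝ) * t ^ m ≤
      (∑ l ∈ Finset.range N, t ^ l) ^ (k + 1) := by
  induction k with
  | zero => intro N t ht; simp
  | succ k ih =>
    intro N t ht
    have hsum_nonneg : (0:ℝ) ≤ ∑ l ∈ Finset.range N, t ^ l :=
      Finset.sum_nonneg fun l _ => pow_nonneg ht l
    have hockey : ∀ m : ℕ, ((m + (k+1)).choose (k+1) : ℝ) =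
        ∑ i ∈ Finset.range (m + 1), ((i + k).choose k : ℝ) := by
      intro m
      have h1 : ∑ x ∈ Finset.Icc k (m + k), x.choose k = (m + k + 1).choose (k + 1) :=
        Nat.sum_Icc_choose (m + k) k
      have h2 : ∑ x ∈ Finset.Icc k (m + k), x.choose k
          = ∑ i ∈ Finset.range (m + 1), (k + i).choose k := by
        rw [← Finset.Ico_add_one_right_eq_Icc, Finset.sum_Ico_eq_sum_range]
        have h3 : m + k + 1 - k = m + 1 := by omega
        rw [h3]
      rw [h2] at h1
      have : m + (k + 1) = m + k + 1 := by ring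
      rw [this, ← h1]
      push_cast
      refine Finset.sum_congr rfl fun i _ => ?_
      rw [Nat.add_comm i k]
    calc ∑ m ∈ Finset.range N, ((m + (k+1)).choose (k+1) : ℝ) * t ^ m
        = ∑ m ∈ Finset.range N, ∑ i ∈ Finset.range (m + 1),
            ((i + k).choose k : ℝ) * t ^ m := by
          refine Finset.sum_congr rfl fun m _ => ?_
          rw [hockey m, Finset.sum_mul]
      _ = ∑ i ∈ Finset.range N, ∑ m ∈ Finset.Ico i N,
            ((i + k).choose k : ℝ) * t ^ m := by
          simp only [Finset.range_eq_Ico]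
          exact (Finset.sum_Ico_Ico_comm 0 N fun i m => ((i + k).choose k : ℝ) * t ^ m).symm
      _ ≤ ∑ i ∈ Finset.range N,
            ((i + k).choose k : ℝ) * t ^ i * (∑ l ∈ Finset.range N, t ^ l) := by
          refine Finset.sum_le_sum fun i _ => ?_
          rw [← Finset.mul_sum, mul_assoc]
          refine mul_le_mul_of_nonneg_left ?_ (by positivity)
          have : ∑ m ∈ Finset.Ico i N, t ^ m
              = t ^ i * ∑ d ∈ Finset.range (N - i), t ^ d := by
            rw [Finset.sum_Ico_eq_sum_range, Finset.mul_sum]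
            exact Finset.sum_congr rfl fun d _ => (pow_add t i d)
          rw [this]
          refine mul_le_mul_of_nonneg_left ?_ (pow_nonneg ht i)
          exact Finset.sum_le_sum_of_subset_of_nonneg
            (Finset.range_subset_range.2 (Nat.sub_le N i))
            (fun l _ _ => pow_nonneg ht l)
      _ = (∑ m ∈ Finset.range N, ((m + k).choose k : ℝ) * t ^ m)
            * (∑ l ∈ Finset.range N, t ^ l) := by rw [Finset.sum_mul]
      _ ≤ (∑ l ∈ Finset.range N, t ^ l) ^ (k + 1) * (∑ l ∈ Finset.range N, t ^ l) := by
          refine mul_le_mul_of_nonneg_right (ih N t ht) hsum_nonneg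
      _ = (∑ l ∈ Finset.range N, t ^ l) ^ (k + 1 + 1) := by ring

/-- For every `k j : ℕ` and `t ≥ 0`, the `k`-th derivative of
`κ_j(t) = ∑_{l=0}^{j} t^l` satisfies `κ_j^{(k)}(t) ≤ k! · (κ_j(t))^(k+1)`. -/
theorem stmt_0 (k j : ℕ) (t : ℝ) (ht : 0 ≤ t) :
    iteratedDeriv k (fun s : ℝ => ∑ l ∈ Finset.range (j + 1), s ^ l) t ≤
      (k.factorial : ℝ) * (∑ l ∈ Finset.range (j + 1), t ^ l) ^ (k + 1) := by
  rw [show iteratedDeriv k (fun s : ℝ => ∑ l ∈ Finset.range (j + 1), s ^ l) t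
      = ∑ l ∈ Finset.range (j + 1), (l.descFactorial k : ℝ) * t ^ (l - k) from by
    rw [kappa_iteratedDeriv]]
  have hrw : ∑ l ∈ Finset.range (j + 1), (l.descFactorial k : ℝ) * t ^ (l - k)
      = (k.factorial : ℝ) * ∑ l ∈ Finset.range (j + 1), (l.choose k : ℝ) * t ^ (l - k) := by
    rw [Finset.mul_sum]
    refine Finset.sum_congr rfl fun l _ => ?_
    rw [Nat.descFactorial_eq_factorial_mul_choose]
    push_cast
    ring
  rw [hrw]
  refine mul_le_mul_of_nonneg_left ?_ (by positivity)
  -- reduce sum over range to sum over Ico k (j+1), reindex, apply key lemma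
  have h1 : ∑ l ∈ Finset.range (j + 1), (l.choose k : ℝ) * t ^ (l - k)
      = ∑ l ∈ Finset.Ico k (j + 1), (l.choose k : ℝ) * t ^ (l - k) := by
    symm
    refine Finset.sum_subset ?_ ?_
    · intro x hx
      simp only [Finset.mem_Ico] at hx
      exact Finset.mem_range.2 hx.2
    · intro x hx hx'
      simp only [Finset.mem_range] at hx
      simp only [Finset.mem_Ico, not_and, not_lt] at hx'
      rcases Nat.lt_or_ge x k with h | h
      · rw [Nat.choose_eq_zero_of_lt h]; simp
      · exact absurd (hx' h) (by omega)
  have h2 : ∑ l ∈ Finset.Ico k (j + 1), (l.choose k : ℝ) * t ^ (l - k)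
      = ∑ m ∈ Finset.range (j + 1 - k), ((m + k).choose k : ℝ) * t ^ m := by
    rw [Finset.sum_Ico_eq_sum_range]
    refine Finset.sum_congr rfl fun m _ => ?_
    rw [Nat.add_comm k m, Nat.add_sub_cancel]
  rw [h1, h2]
  calc ∑ m ∈ Finset.range (j + 1 - k), ((m + k).choose k : ℝ) * t ^ m
      ≤ (∑ l ∈ Finset.range (j + 1 - k), t ^ l) ^ (k + 1) := kappa_key k _ t ht
    _ ≤ (∑ l ∈ Finset.range (j + 1), t ^ l) ^ (k + 1) := by
        refine pow_le_pow_left₀ (Finset.sum_nonneg fun l _ => pow_nonneg ht l) ?_ _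
        exact Finset.sum_le_sum_of_subset_of_nonneg
          (Finset.range_subset_range.2 (Nat.sub_le _ _)) (fun l _ _ => pow_nonneg ht l)
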